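/- Let R be an exchange ring. If I_1, …, I_n are right ideals of R such that I_1 + ⋯ + I_n = R, then there exist pairwise orthogonal idempotents e_1, …, e_n ∈ R such that e_1 + ⋯ + e_n = 1 and e_j ∈ I_j for all j. -/
import Mathlib


universe u

/-- A unital ring `R` is an *exchange ring* if for every `a ∈ R` there exists an
idempotent `e ∈ aR` such that `1 - e ∈ (1 - a)R`. -/
def IsExchangeRing (R : Type*) [Ring R] : Prop :=
  ∀ a : R, ∃ e r s : R, IsIdempotentElem e ∧ e = a * r ∧ 1 - e = (1 - a) * s

variable {R : Type u} [Ring R]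

lemma corner_exchange (hR : IsExchangeRing R) (f b : R) (hf : IsIdempotentElem f)
    (hb : f * b * f = b) :
    ∃ g r s : R, IsIdempotentElem g ∧ f * g = g ∧ g * f = g ∧ g = b * r ∧
      f - g = (f - b) * s := by
  obtain ⟨e, r, s, he, her, hes⟩ := hR (b + 1 - f)
  have h1 : (1 : R) - (b + 1 - f) = f - b := by noncomm_ring
  rw [h1] at hes
  have hfb : f * b = b := by rw [← hb, ← mul_assoc, ← mul_assoc, hf]
  have hffb : f * (f - b) = f - b := by rw [mul_sub, hf, hfb]
  have hu : (1 - e) * (1 - e) = 1 - e := he.one_sub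
  have hfu : f * (1 - e) = 1 - e := by rw [hes, ← mul_assoc, hffb]
  have hfe : f * e = b * r := by
    rw [her, ← mul_assoc, mul_sub, mul_add, hf, mul_one, hfb, add_sub_cancel_right]
  have hfe2 : f * e = f - 1 + e := by
    have h := hfu
    rw [mul_sub, mul_one, sub_eq_sub_iff_sub_eq_sub] at h
    linear_combination (norm := noncomm_ring) -h
  refine ⟨f - (1 - e) * f, r * f, s * f, ?_, ?_, ?_, ?_, ?_⟩
  · show (f - (1 - e) * f) * (f - (1 - e) * f) = f - (1 - e) * f
    have h2 : f * ((1 - e) * f) = (1 - e) * f := by rw [← mul_assoc, hfu]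
    have h3 : (1 - e) * f * ((1 - e) * f) = (1 - e) * f := by
      rw [mul_assoc (1-e) f ((1-e)*f), h2, ← mul_assoc, hu]
    rw [sub_mul, mul_sub, mul_sub, hf, h2, mul_assoc (1-e) f f, hf, h3]
    abel
  · rw [mul_sub, hf, ← mul_assoc, hfu]
  · rw [sub_mul, hf, mul_assoc, hf]
  · have hef : f - (1 - e) * f = e * f := by noncomm_ring
    have h4 : f * e * f = e * f := by
      rw [hfe2, add_mul, sub_mul, hf, one_mul]
      abel
    rw [hef, ← h4, hfe, mul_assoc]
  · rw [sub_sub_cancel, hes, mul_assoc]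

lemma key (hR : IsExchangeRing R) :
    ∀ (n : ℕ) (f : R), IsIdempotentElem f → ∀ (I : Fin n → Submodule Rᵐᵒᵖ R) (a : Fin n → R),
      (∀ j, a j ∈ I j) → f = ∑ j, f * a j * f →
      ∃ e : Fin n → R, (∀ j, IsIdempotentElem (e j)) ∧ (∀ j k, j ≠ k → e j * e k = 0) ∧
        (∑ j, e j = f) ∧ ∀ j, ∃ c ∈ I j, e j = f * c := by
  intro n
  induction n with
  | zero =>
    intro f hf I a ha hsum
    refine ⟨fun j => j.elim0, fun j => j.elim0, fun j => j.elim0, ?_, fun j => j.elim0⟩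
    simpa using hsum.symm
  | succ n ih =>
    intro f hf I a ha hsum
    have hfz : ∀ z : R, f * (f * z) = f * z := fun z => by rw [← mul_assoc, hf]
    set b := f * a 0 * f with hbdef
    have hbb : f * b * f = b := by
      rw [hbdef, ← mul_assoc, ← mul_assoc, hf.eq, mul_assoc (f * a 0) f f, hf.eq]
    obtain ⟨g0, r, s, hg0, hfg0, hg0f, hg0br, hfsub⟩ := corner_exchange hR f b hf hbb
    set f' := f - g0 with hf'def
    have hff' : f * f' = f' := by rw [hf'def, mul_sub, hf.eq, hfg0]
    have hf'f : f' * f = f' := by rw [hf'def, sub_mul, hf.eq, hg0f]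
    have hf' : IsIdempotentElem f' := by
      show f' * f' = f'
      rw [hf'def, mul_sub, sub_mul, sub_mul, hf.eq, hfg0, hg0f, hg0.eq]
      abel
    have hf'g0 : f' * g0 = 0 := by
      rw [hf'def, sub_mul, hfg0, hg0.eq, sub_self]
    have hg0f' : g0 * f' = 0 := by
      rw [hf'def, mul_sub, hg0f, hg0.eq, sub_self]
    have hf'z : ∀ z : R, f' * (f' * z) = f' * z := fun z => by rw [← mul_assoc, hf'.eq]
    have hf'fz : ∀ z : R, f' * (f * z) = f' * z := fun z => by rw [← mul_assoc, hf'f]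
    -- hypothesis for IH
    rw [Fin.sum_univ_succ] at hsum
    have h2 : f - b = ∑ j : Fin n, f * a j.succ * f := sub_eq_of_eq_add' hsum
    have h3 : f' = ∑ j : Fin n, f * a j.succ * f * s := by
      rw [hfsub, h2, Finset.sum_mul]
    set a' : Fin n → R := fun j => a j.succ * (f * (s * f')) with ha'def
    have ha' : ∀ j, a' j ∈ I j.succ := fun j =>
      (I j.succ).smul_mem (MulOpposite.op _) (ha j.succ)
    have hstep : f' = ∑ j : Fin n, f' * a' j * f' := by
      have h4 : f' * f' * f' = f' := by rw [hf'.eq, hf'.eq]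
      calc f' = f' * f' * f' := h4.symm
        _ = f' * (∑ j : Fin n, f * a j.succ * f * s) * f' := by rw [← h3]
        _ = ∑ j : Fin n, f' * (f * a j.succ * f * s) * f' := by
            rw [Finset.mul_sum, Finset.sum_mul]
        _ = ∑ j : Fin n, f' * a' j * f' := by
            refine Finset.sum_congr rfl fun j _ => ?_
            simp only [ha'def, mul_assoc, hf'fz, hf'.eq]
    obtain ⟨g, hgi, hgo, hgs, hgm⟩ := ih f' hf' (fun j => I j.succ) a' ha' hstep
    choose c hc1 hc2 using hgm
    -- basic facts about the g j
    have hf'g : ∀ j, f' * g j = g j := by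
      intro j
      rw [← hgs, Finset.sum_mul, Finset.sum_eq_single j (fun k _ hk => hgo k j hk)
        (fun h => absurd (Finset.mem_univ j) h), (hgi j).eq]
    have hgf' : ∀ j, g j * f' = g j := by
      intro j
      rw [← hgs, Finset.mul_sum, Finset.sum_eq_single j (fun k _ hk => hgo j k (Ne.symm hk))
        (fun h => absurd (Finset.mem_univ j) h), (hgi j).eq]
    have hgf : ∀ j, g j * f = g j := fun j => by
      rw [← hgf' j, mul_assoc, hf'f, hgf' j]
    have hgg0 : ∀ j, g j * g0 = 0 := fun j => by
      rw [← hgf' j, mul_assoc, hf'g0, mul_zero]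
    have hg0g : ∀ j, g0 * g j = 0 := fun j => by
      rw [← hf'g j, ← mul_assoc, hg0f', zero_mul]
    -- the conjugating unit
    set x := ∑ j : Fin n, f * c j * g j with hxdef
    have hfx : f * x = x := by
      rw [hxdef, Finset.mul_sum]
      exact Finset.sum_congr rfl fun j _ => by
        simp only [mul_assoc, hfz]
    have hf'x : f' * x = f' := by
      calc f' * x = ∑ j : Fin n, g j := by
            rw [hxdef, Finset.mul_sum]
            refine Finset.sum_congr rfl fun j _ => ?_
            rw [← mul_assoc, ← mul_assoc, hf'f, ← hc2 j, (hgi j).eq]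
        _ = f' := hgs
    have hxf' : x * f' = x := by
      rw [hxdef, Finset.sum_mul]
      exact Finset.sum_congr rfl fun j _ => by rw [mul_assoc, hgf' j]
    have hxf : x * f = x := by
      rw [hxdef, Finset.sum_mul]
      exact Finset.sum_congr rfl fun j _ => by rw [mul_assoc, hgf j]
    have hxx : x * x = x := by
      calc x * x = x * (f' * x) := by rw [← mul_assoc, hxf']
        _ = x * f' := by rw [hf'x]
        _ = x := hxf'
    set t := 1 - f' + x with htdef
    set v := 1 - x + f' with hvdef
    have htv : t * v = 1 := by
      rw [htdef, hvdef]
      simp only [add_mul, sub_mul, mul_add, mul_sub, one_mul, mul_one, hf'.eq, hf'x, hxx, hxf']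
      abel
    have hvt : v * t = 1 := by
      rw [htdef, hvdef]
      simp only [add_mul, sub_mul, mul_add, mul_sub, one_mul, mul_one, hf'.eq, hf'x, hxx, hxf']
      abel
    have htfv : t * f * v = f := by
      have htf : t * f = f - f' + x := by
        rw [htdef, add_mul, sub_mul, one_mul, hf'f, hxf]
      rw [htf, hvdef]
      simp only [add_mul, sub_mul, mul_add, mul_sub, one_mul, mul_one, hfx, hff', hf'x,
        hf'.eq, hxx, hxf']
      abel
    -- conjugation facts
    have hconj_idem : ∀ y : R, IsIdempotentElem y → IsIdempotentElem (t * y * v) := by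
      intro y hy
      show t * y * v * (t * y * v) = t * y * v
      calc t * y * v * (t * y * v) = t * y * (v * t) * (y * v) := by
            simp only [mul_assoc]
        _ = t * y * v := by rw [hvt, mul_one, ← mul_assoc, mul_assoc t y y, hy.eq]
    have hconj_orth : ∀ y z : R, y * z = 0 → (t * y * v) * (t * z * v) = 0 := by
      intro y z hyz
      calc t * y * v * (t * z * v) = t * y * (v * t) * (z * v) := by simp only [mul_assoc]
        _ = 0 := by rw [hvt, mul_one, ← mul_assoc, mul_assoc t y z, hyz, mul_zero, zero_mul]
    have htg0 : t * g0 = g0 := by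
      have hxg0 : x * g0 = 0 := by
        rw [hxdef, Finset.sum_mul]
        exact Finset.sum_eq_zero fun j _ => by rw [mul_assoc, hgg0 j, mul_zero]
      rw [htdef, add_mul, sub_mul, one_mul, hf'g0, hxg0, sub_zero, add_zero]
    have htg : ∀ j, t * g j = f * c j * g j := by
      intro j
      have hxg : x * g j = f * c j * g j := by
        rw [hxdef, Finset.sum_mul, Finset.sum_eq_single j
          (fun k _ hk => by rw [mul_assoc, hgo k j hk, mul_zero])
          (fun h => absurd (Finset.mem_univ j) h), mul_assoc, (hgi j).eq]
      rw [htdef, add_mul, sub_mul, one_mul, hf'g j, hxg, sub_self, zero_add]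
    -- assemble
    refine ⟨Fin.cons (t * g0 * v) (fun j => t * g j * v), ?_, ?_, ?_, ?_⟩
    · intro j
      refine Fin.cases ?_ ?_ j
      · exact hconj_idem g0 hg0
      · intro k
        exact hconj_idem (g k) (hgi k)
    · intro j k hjk
      rcases Fin.eq_zero_or_eq_succ j with rfl | ⟨j', rfl⟩ <;>
        rcases Fin.eq_zero_or_eq_succ k with rfl | ⟨k', rfl⟩
      · exact absurd rfl hjk
      · simp only [Fin.cons_zero, Fin.cons_succ]
        exact hconj_orth _ _ (hg0g _)
      · simp only [Fin.cons_zero, Fin.cons_succ]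
        exact hconj_orth _ _ (hgg0 _)
      · simp only [Fin.cons_succ]
        exact hconj_orth _ _ (hgo j' k' fun h => hjk (by rw [h]))
    · rw [Fin.sum_univ_succ]
      simp only [Fin.cons_zero, Fin.cons_succ]
      have : ∑ j : Fin n, t * g j * v = t * f' * v := by
        rw [← Finset.sum_mul, ← Finset.mul_sum, hgs]
      rw [this, ← add_mul, ← mul_add]
      have hg0f'' : g0 + f' = f := by rw [hf'def]; abel
      rw [hg0f'', htfv]
    · intro j
      refine Fin.cases ?_ ?_ j
      · refine ⟨a 0 * (f * (r * v)), (I 0).smul_mem (MulOpposite.op _) (ha 0), ?_⟩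
        simp only [Fin.cons_zero]
        rw [htg0, hg0br, hbdef]
        simp only [mul_assoc]
      · intro k
        refine ⟨c k * (g k * v), (I k.succ).smul_mem (MulOpposite.op _) (hc1 k), ?_⟩
        simp only [Fin.cons_succ]
        rw [htg k]
        simp only [mul_assoc]


lemma mem_sum_ideals : ∀ (n : ℕ) (I : Fin n → Submodule Rᵐᵒᵖ R) (x : R),
    x ∈ ∑ j, I j → ∃ a : Fin n → R, (∀ j, a j ∈ I j) ∧ x = ∑ j, a j := by
  intro n
  induction n with
  | zero =>
    intro I x hx
    refine ⟨fun j => j.elim0, fun j => j.elim0, ?_⟩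
    simpa using hx
  | succ n ih =>
    intro I x hx
    rw [Fin.sum_univ_succ] at hx
    rw [Submodule.add_eq_sup] at hx
    obtain ⟨y, hy, z, hz, rfl⟩ := Submodule.mem_sup.mp hx
    obtain ⟨a', ha', rfl⟩ := ih (fun j => I j.succ) z hz
    refine ⟨Fin.cons y a', ?_, ?_⟩
    · intro j
      rcases Fin.eq_zero_or_eq_succ j with rfl | ⟨j', rfl⟩
      · simpa using hy
      · simpa using ha' j'
    · rw [Fin.sum_univ_succ]
      simp

/-- Right ideals are `Rᵐᵒᵖ`-submodules of `R`, and their sum is taken in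
the monoid of submodules (where addition is supremum). -/
theorem stmt16 (R : Type u) [Ring R] (hR : IsExchangeRing R)
    (n : ℕ) (I : Fin n → Submodule Rᵐᵒᵖ R) (hI : ∑ j, I j = ⊤) :
    ∃ e : Fin n → R, (∀ j, IsIdempotentElem (e j)) ∧
      (∀ j k, j ≠ k → e j * e k = 0) ∧ (∑ j, e j = 1) ∧ (∀ j, e j ∈ I j) := by
  have h1 : (1 : R) ∈ ∑ j, I j := by rw [hI]; trivial
  obtain ⟨a, ha, hsum⟩ := mem_sum_ideals n I 1 h1
  obtain ⟨e, he1, he2, he3, he4⟩ := key hR n 1 IsIdempotentElem.one I a ha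
    (by simpa using hsum)
  refine ⟨e, he1, he2, he3, fun j => ?_⟩
  obtain ⟨c, hc, hec⟩ := he4 j
  rw [hec, one_mul]
  exact hc
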